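/- arXiv:2303.11612 — 2 statements merged into one kernel-verified Lean document; each statement's English description precedes it below -/
import Mathlib

section
/- (Deterministic core of Theorem 9, q = 1 sampled version.) Let C ∈ ℝ^{I×T} with SVD C = U Σ V^T, let μ < r = min{I,T}, and G ∈ ℝ^{I×(μ+K)}. Write U^T G = [H; R] with H ∈ ℝ^{μ×(μ+K)}, assume H has full row rank, and define F = [H^†, 0] U^T ∈ ℝ^{(μ+K)×I}. Then ‖C C^T G F − C C^T‖_F ≤ (‖H^†‖_2 ‖R‖_2 + 1) · (∑_{i=μ+1}^{r} σ_i(C)^4)^{1/2} and ‖F‖_2 ≤ ‖H^†‖_2. -/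
open Matrix

noncomputable section

/-- Frobenius norm of a real matrix. -/
def frob {m n : Type*} [Fintype m] [Fintype n] (A : Matrix m n ℝ) : ℝ :=
  Real.sqrt (∑ i, ∑ j, (A i j) ^ 2)

/-- Spectral norm of a real matrix. -/
def spec {m n : Type*} [Fintype m] [Fintype n] [DecidableEq n] (A : Matrix m n ℝ) : ℝ :=
  ‖LinearMap.toContinuousLinearMap (Matrix.toEuclideanLin A)‖

section SpecLemmas
open scoped Matrix.Norms.L2Operator

variable {l m n : Type*} [Fintype l] [Fintype m] [Fintype n]

lemma spec_eq_l2 [DecidableEq n] (A : Matrix m n ℝ) : spec A = ‖A‖ := rfl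

lemma spec_nonneg [DecidableEq n] (A : Matrix m n ℝ) : 0 ≤ spec A := by
  rw [spec_eq_l2]; exact norm_nonneg _

lemma spec_mul_le [DecidableEq n] [DecidableEq l] (A : Matrix m n ℝ) (B : Matrix n l ℝ) :
    spec (A * B) ≤ spec A * spec B := by
  simp only [spec_eq_l2]; exact Matrix.l2_opNorm_mul A B

lemma spec_transpose [DecidableEq m] [DecidableEq n] (A : Matrix m n ℝ) : spec Aᵀ = spec A := by
  simp only [spec_eq_l2]
  rw [← Matrix.conjTranspose_eq_transpose_of_trivial]
  exact Matrix.l2_opNorm_conjTranspose A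

lemma spec_mulVec_sq [DecidableEq n] (A : Matrix m n ℝ) (x : n → ℝ) :
    ∑ i, (A.mulVec x i) ^ 2 ≤ spec A ^ 2 * ∑ j, (x j) ^ 2 := by
  have h := Matrix.l2_opNorm_mulVec A ((WithLp.equiv 2 (n → ℝ)).symm x)
  have hx : ‖(WithLp.equiv 2 (n → ℝ)).symm x‖ = Real.sqrt (∑ j, (x j) ^ 2) := by
    rw [EuclideanSpace.norm_eq]
    simp [PiLp.toLp_apply, sq_abs]
  have hy : ‖(EuclideanSpace.equiv m ℝ).symm (A *ᵥ (WithLp.equiv 2 (n → ℝ)).symm x)‖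
      = Real.sqrt (∑ i, (A.mulVec x i) ^ 2) := by
    rw [EuclideanSpace.norm_eq]
    congr 1
    apply Finset.sum_congr rfl
    intro i _
    rw [Real.norm_eq_abs, sq_abs]
    rfl
  rw [hx, hy] at h
  have h2 : Real.sqrt (∑ i, (A.mulVec x i) ^ 2) ^ 2 ≤
      (‖A‖ * Real.sqrt (∑ j, (x j) ^ 2)) ^ 2 := by
    apply pow_le_pow_left₀ (Real.sqrt_nonneg _) h 2
  rw [Real.sq_sqrt (by positivity)] at h2
  calc ∑ i, (A.mulVec x i) ^ 2 ≤ (‖A‖ * Real.sqrt (∑ j, (x j) ^ 2)) ^ 2 := h2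
    _ = spec A ^ 2 * ∑ j, (x j) ^ 2 := by
        rw [mul_pow, Real.sq_sqrt (by positivity), spec_eq_l2]

lemma spec_le_bound [DecidableEq n] (A : Matrix m n ℝ) (c : ℝ) (hc : 0 ≤ c)
    (h : ∀ x : n → ℝ, ∑ i, (A.mulVec x i) ^ 2 ≤ c ^ 2 * ∑ j, (x j) ^ 2) :
    spec A ≤ c := by
  apply ContinuousLinearMap.opNorm_le_bound _ hc
  intro x
  have hx : ‖x‖ = Real.sqrt (∑ j, ‖x j‖ ^ 2) := EuclideanSpace.norm_eq x
  have key := h (fun j => x j)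
  have hnorm : ‖(LinearMap.toContinuousLinearMap (Matrix.toEuclideanLin A)) x‖
      = Real.sqrt (∑ i, (A.mulVec (fun j => x j) i) ^ 2) := by
    have : (LinearMap.toContinuousLinearMap (Matrix.toEuclideanLin A)) x
        = (WithLp.equiv 2 (m → ℝ)).symm (A *ᵥ (WithLp.equiv 2 (n → ℝ)) x) := rfl
    rw [this, EuclideanSpace.norm_eq]
    congr 1
    apply Finset.sum_congr rfl
    intro i _
    rw [Real.norm_eq_abs, sq_abs]
    rfl
  rw [hnorm, hx]
  calc Real.sqrt (∑ i, (A.mulVec (fun j => x j) i) ^ 2)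
      ≤ Real.sqrt (c ^ 2 * ∑ j, (x j) ^ 2) := Real.sqrt_le_sqrt key
    _ = c * Real.sqrt (∑ j, ‖x j‖ ^ 2) := by
        rw [Real.sqrt_mul (by positivity), Real.sqrt_sq hc]
        simp [sq_abs]

lemma row_sq_le_spec [DecidableEq m] [DecidableEq n] (A : Matrix m n ℝ) (k : m) :
    ∑ j, (A k j) ^ 2 ≤ spec A ^ 2 := by
  have h := spec_mulVec_sq Aᵀ (Pi.single k 1)
  have h1 : ∀ j, Aᵀ.mulVec (Pi.single k 1) j = A k j := by
    intro j
    simp [mulVec, dotProduct, Pi.single_apply, mul_comm]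
  have h2 : ∑ i : m, (Pi.single k 1 : m → ℝ) i ^ 2 = 1 := by
    simp [Pi.single_apply, apply_ite (· ^ (2:ℕ))]
  simp only [h1, h2, mul_one, spec_transpose] at h
  exact h

end SpecLemmas

section FrobLemmas
attribute [local instance] Matrix.frobeniusNormedAddCommGroup

variable {l m n : Type*} [Fintype l] [Fintype m] [Fintype n]

lemma frob_eq_norm (A : Matrix m n ℝ) : frob A = ‖A‖ := by
  rw [Matrix.frobenius_norm_def, frob, Real.sqrt_eq_rpow]
  congr 1
  apply Finset.sum_congr rfl; intro i _
  apply Finset.sum_congr rfl; intro j _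
  rw [Real.rpow_two, Real.norm_eq_abs, sq_abs]

lemma frob_add_le (A B : Matrix m n ℝ) : frob (A + B) ≤ frob A + frob B := by
  simp only [frob_eq_norm]; exact norm_add_le A B

end FrobLemmas

lemma frob_nonneg {m n : Type*} [Fintype m] [Fintype n] (A : Matrix m n ℝ) : 0 ≤ frob A :=
  Real.sqrt_nonneg _

lemma frob_transpose {m n : Type*} [Fintype m] [Fintype n] (A : Matrix m n ℝ) :
    frob Aᵀ = frob A := by
  rw [frob, frob, Finset.sum_comm]
  simp only [transpose_apply]

section OrthLemmas
variable {m n l : Type*} [Fintype m] [Fintype n] [Fintype l]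

lemma frob_mul_orthL [DecidableEq n] {U : Matrix m n ℝ} (hU : Uᵀ * U = 1)
    (X : Matrix n l ℝ) : frob (U * X) = frob X := by
  have key : (U * X)ᵀ * (U * X) = Xᵀ * X := by
    rw [transpose_mul, Matrix.mul_assoc, ← Matrix.mul_assoc Uᵀ U X, hU, Matrix.one_mul]
  rw [frob, frob, Finset.sum_comm, Finset.sum_comm (f := fun i j => (X i j) ^ 2)]
  congr 1
  apply Finset.sum_congr rfl; intro j _
  have h1 : ∑ i, ((U * X) i j) ^ 2 = ((U * X)ᵀ * (U * X)) j j := by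
    simp only [mul_apply, transpose_apply, sq]
  have h2 : ∑ i, (X i j) ^ 2 = (Xᵀ * X) j j := by
    simp only [mul_apply, transpose_apply, sq]
  rw [h1, h2, key]

lemma frob_mul_orthR [DecidableEq n] {U : Matrix m n ℝ} (hU : Uᵀ * U = 1)
    (X : Matrix l n ℝ) : frob (X * Uᵀ) = frob X := by
  rw [← frob_transpose (X * Uᵀ), transpose_mul, transpose_transpose,
    frob_mul_orthL hU, frob_transpose]

lemma frob_mul_le_spec [DecidableEq n] (A : Matrix m n ℝ) (B : Matrix n l ℝ) :
    frob (A * B) ≤ spec A * frob B := by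
  have key : ∀ j, ∑ i, ((A * B) i j) ^ 2 ≤ spec A ^ 2 * ∑ k, (B k j) ^ 2 := by
    intro j
    have : ∀ i, (A * B) i j = A.mulVec (fun k => B k j) i := by
      intro i; simp [mul_apply, mulVec, dotProduct]
    simp only [this]
    exact spec_mulVec_sq A _
  have hs : 0 ≤ spec A := spec_nonneg A
  rw [frob, frob, Finset.sum_comm]
  calc Real.sqrt (∑ j, ∑ i, ((A * B) i j) ^ 2)
      ≤ Real.sqrt (∑ j : l, spec A ^ 2 * ∑ k, (B k j) ^ 2) := by
        apply Real.sqrt_le_sqrt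
        exact Finset.sum_le_sum fun j _ => key j
    _ = spec A * Real.sqrt (∑ k, ∑ j, (B k j) ^ 2) := by
        rw [← Finset.mul_sum, Real.sqrt_mul (by positivity), Real.sqrt_sq hs,
          Finset.sum_comm]

end OrthLemmas

lemma le_of_sq_le_mul {a b : ℝ} (ha : 0 ≤ a) (hb : 0 ≤ b) (h : a ^ 2 ≤ b * a) : a ≤ b := by
  nlinarith [h, ha, hb]

lemma sum_dite_lt {r μ : ℕ} (hμ : μ ≤ r) (f : Fin μ → ℝ) :
    ∑ j : Fin r, (if hj : (j : ℕ) < μ then f ⟨j, hj⟩ else 0) = ∑ j : Fin μ, f j := by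
  classical
  let e : Fin μ ↪ Fin r := ⟨Fin.castLE hμ, Fin.castLE_injective hμ⟩
  have h1 : ∑ j : Fin r, (if hj : (j : ℕ) < μ then f ⟨j, hj⟩ else 0)
      = ∑ j ∈ Finset.univ.map e, (if hj : (j : ℕ) < μ then f ⟨j, hj⟩ else 0) := by
    symm
    apply Finset.sum_subset (Finset.subset_univ _)
    intro x _ hx
    rw [dif_neg]
    intro hlt
    apply hx
    rw [Finset.mem_map]
    exact ⟨⟨x, hlt⟩, Finset.mem_univ _, Fin.ext rfl⟩
  rw [h1, Finset.sum_map]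
  apply Finset.sum_congr rfl
  intro j _
  have hj : ((e j : Fin r) : ℕ) < μ := j.isLt
  rw [dif_pos hj]
  congr 1

/-- Deterministic core of Theorem 9 (`q = 1`, sampled version): with the thin SVD
`C = U Σ Vᵀ`, blocks `H`, `R` of `Uᵀ G`, full row rank `H` with `H† = Hᵀ (H Hᵀ)⁻¹`,
and `F = [H†, 0] Uᵀ`, one has the stated bounds. -/
theorem stmt12 {I T r μ K : ℕ}
    (hr : r = min I T) (hμr : μ < r)
    (C : Matrix (Fin I) (Fin T) ℝ)
    (U : Matrix (Fin I) (Fin r) ℝ) (V : Matrix (Fin T) (Fin r) ℝ) (σ : Fin r → ℝ)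
    (hU : Uᵀ * U = 1) (hV : Vᵀ * V = 1)
    (hσnn : ∀ i, 0 ≤ σ i) (hσmono : Antitone σ)
    (hC : C = U * Matrix.diagonal σ * Vᵀ)
    (G : Matrix (Fin I) (Fin (μ + K)) ℝ)
    (H : Matrix (Fin μ) (Fin (μ + K)) ℝ) (R : Matrix (Fin (r - μ)) (Fin (μ + K)) ℝ)
    (hH : ∀ (i : Fin μ) (j : Fin (μ + K)),
      H i j = (Uᵀ * G) ⟨i, Nat.lt_trans i.isLt hμr⟩ j)
    (hR : ∀ (i : Fin (r - μ)) (j : Fin (μ + K)),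
      R i j = (Uᵀ * G) ⟨μ + i, by have := i.isLt; omega⟩ j)
    (hrank : H.rank = μ)
    (Hdag : Matrix (Fin (μ + K)) (Fin μ) ℝ) (hHdag : Hdag = Hᵀ * (H * Hᵀ)⁻¹)
    (F : Matrix (Fin (μ + K)) (Fin I) ℝ)
    (hF : F = (Matrix.of fun (a : Fin (μ + K)) (j : Fin r) =>
        if h : (j : ℕ) < μ then Hdag a ⟨j, h⟩ else 0) * Uᵀ) :
    frob (C * Cᵀ * G * F - C * Cᵀ) ≤
        (spec Hdag * spec R + 1) *
          Real.sqrt (∑ i ∈ Finset.univ.filter (fun i : Fin r => μ ≤ (i : ℕ)), σ i ^ 4) ∧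
      spec F ≤ spec Hdag := by
  classical
  have hμr' : μ ≤ r := hμr.le
  set B : Matrix (Fin r) (Fin (μ + K)) ℝ := Uᵀ * G with hB
  set P : Matrix (Fin (μ + K)) (Fin r) ℝ :=
    Matrix.of fun (a : Fin (μ + K)) (j : Fin r) =>
      if h : (j : ℕ) < μ then Hdag a ⟨j, h⟩ else 0 with hP
  set N : Matrix (Fin (r - μ)) (Fin μ) ℝ := R * Hdag with hN
  -- invertibility of H Hᵀ
  have hHHrank : (H * Hᵀ).rank = μ := by
    rw [Matrix.rank_self_mul_transpose, hrank]
  have hHHunit : IsUnit (H * Hᵀ) := by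
    rw [← Matrix.mulVec_surjective_iff_isUnit]
    have htop : LinearMap.range (H * Hᵀ).mulVecLin = ⊤ := by
      apply Submodule.eq_top_of_finrank_eq
      have hdef : Module.finrank ℝ (LinearMap.range (H * Hᵀ).mulVecLin) = (H * Hᵀ).rank := rfl
      rw [hdef, hHHrank, Module.finrank_fintype_fun_eq_card, Fintype.card_fin]
    have hsurj : Function.Surjective (H * Hᵀ).mulVecLin := LinearMap.range_eq_top.mp htop
    exact fun y => by
      obtain ⟨x, hx⟩ := hsurj y
      exact ⟨x, hx⟩
  have hHdagmul : H * Hdag = 1 := by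
    rw [hHdag, ← Matrix.mul_assoc]
    exact Matrix.mul_nonsing_inv _ ((Matrix.isUnit_iff_isUnit_det _).mp hHHunit)
  -- C Cᵀ
  have hCC : C * Cᵀ = U * Matrix.diagonal (fun i => σ i ^ 2) * Uᵀ := by
    rw [hC]
    rw [Matrix.transpose_mul, Matrix.transpose_mul, Matrix.transpose_transpose,
      Matrix.diagonal_transpose]
    simp only [Matrix.mul_assoc]
    rw [← Matrix.mul_assoc Vᵀ V, hV, Matrix.one_mul,
      ← Matrix.mul_assoc (Matrix.diagonal σ), Matrix.diagonal_mul_diagonal]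
    congr 2
    funext i
    ring
  set W : Matrix (Fin r) (Fin r) ℝ :=
    Matrix.diagonal (fun i => σ i ^ 2) * (B * P) - Matrix.diagonal (fun i => σ i ^ 2) with hW
  have hdiff : C * Cᵀ * G * F - C * Cᵀ = U * W * Uᵀ := by
    rw [hF, hCC, hW]
    simp only [Matrix.sub_mul, Matrix.mul_sub, Matrix.mul_assoc, hB]
  have hfr : frob (C * Cᵀ * G * F - C * Cᵀ) = frob W := by
    rw [hdiff, Matrix.mul_assoc, frob_mul_orthL hU, frob_mul_orthR hU]
  -- entries of B
  have hBlow : ∀ (i : Fin r) (hi : (i : ℕ) < μ) (a : Fin (μ + K)),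
      B i a = H ⟨i, hi⟩ a := by
    intro i hi a
    exact (hH ⟨i, hi⟩ a).symm
  have hBhigh : ∀ (i : Fin r) (hi : μ ≤ (i : ℕ)) (a : Fin (μ + K)),
      B i a = R ⟨(i : ℕ) - μ, by have := i.isLt; omega⟩ a := by
    intro i hi a
    have h : (⟨μ + ((i : ℕ) - μ), by have := i.isLt; omega⟩ : Fin r) = i :=
      Fin.ext (by simp only [Fin.val_mk]; omega)
    calc B i a = B ⟨μ + ((i : ℕ) - μ), by have := i.isLt; omega⟩ a := by rw [h]
      _ = R ⟨(i : ℕ) - μ, by have := i.isLt; omega⟩ a := (hR ⟨(i : ℕ) - μ, by have := i.isLt; omega⟩ a).symm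
  -- split of W
  set W₁ : Matrix (Fin r) (Fin r) ℝ := Matrix.of fun i j =>
    if hi : μ ≤ (i : ℕ) then
      (if hj : (j : ℕ) < μ then
        σ i ^ 2 * N ⟨(i : ℕ) - μ, by have := i.isLt; omega⟩ ⟨j, hj⟩ else 0)
    else 0 with hW₁
  set W₂ : Matrix (Fin r) (Fin r) ℝ :=
    Matrix.diagonal (fun i => if μ ≤ (i : ℕ) then -σ i ^ 2 else 0) with hW₂
  have hBP : ∀ (i : Fin r) (j : Fin r),
      (B * P) i j = if hj : (j : ℕ) < μ then (B * Hdag) i ⟨j, hj⟩ else 0 := by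
    intro i j
    by_cases hj : (j : ℕ) < μ
    · rw [dif_pos hj]
      simp only [mul_apply, hP, Matrix.of_apply]
      apply Finset.sum_congr rfl
      intro a _
      rw [dif_pos hj]
    · rw [dif_neg hj]
      simp only [mul_apply, hP, Matrix.of_apply]
      apply Finset.sum_eq_zero
      intro a _
      rw [dif_neg hj, mul_zero]
  have hsplit : W = W₁ + W₂ := by
    ext i j
    have hWij : W i j = σ i ^ 2 * (B * P) i j - (if i = j then σ i ^ 2 else 0) := by
      rw [hW]
      simp [Matrix.sub_apply, Matrix.diagonal_mul, Matrix.diagonal_apply]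
    rw [hWij, hBP i j]
    by_cases hi : μ ≤ (i : ℕ)
    · by_cases hj : (j : ℕ) < μ
      · -- i ≥ μ, j < μ
        have hij : i ≠ j := by intro h; rw [h] at hi; omega
        rw [dif_pos hj, if_neg hij]
        have : (B * Hdag) i ⟨j, hj⟩ = N ⟨(i : ℕ) - μ, by have := i.isLt; omega⟩ ⟨j, hj⟩ := by
          rw [hN, mul_apply, mul_apply]
          apply Finset.sum_congr rfl
          intro a _
          rw [hBhigh i hi a]
        rw [this]
        simp only [Matrix.add_apply, hW₁, hW₂, Matrix.of_apply, Matrix.diagonal_apply,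
          dif_pos hi, dif_pos hj, if_neg hij]
        ring
      · -- i ≥ μ, j ≥ μ
        rw [dif_neg hj]
        simp only [Matrix.add_apply, hW₁, hW₂, Matrix.of_apply, Matrix.diagonal_apply,
          dif_pos hi, dif_neg hj]
        by_cases hij : i = j
        · rw [if_pos hij, if_pos hij, hij, if_pos (show μ ≤ (j : ℕ) from hij ▸ hi)]
          ring
        · rw [if_neg hij, if_neg hij]
          ring
    · -- i < μ
      push_neg at hi
      have hBH : ∀ (j' : Fin μ), (B * Hdag) i j' = if (⟨(i : ℕ), hi⟩ : Fin μ) = j' then 1 else 0 := by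
        intro j'
        have : (B * Hdag) i j' = (H * Hdag) ⟨(i : ℕ), hi⟩ j' := by
          rw [mul_apply, mul_apply]
          apply Finset.sum_congr rfl
          intro a _
          rw [hBlow i hi a]
        rw [this, hHdagmul, Matrix.one_apply]
      by_cases hj : (j : ℕ) < μ
      · rw [dif_pos hj, hBH]
        have hiff : ((⟨(i : ℕ), hi⟩ : Fin μ) = ⟨(j : ℕ), hj⟩) ↔ i = j := by
          simp [Fin.ext_iff]
        simp only [Matrix.add_apply, hW₁, hW₂, Matrix.of_apply, Matrix.diagonal_apply,
          dif_neg (by omega : ¬ μ ≤ (i : ℕ))]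
        by_cases hij : i = j
        · have hjμ : ¬ μ ≤ (j : ℕ) := by omega
          rw [if_pos (hiff.mpr hij), if_pos hij, if_pos hij]
          simp [hij, hjμ]
        · rw [if_neg (fun h => hij (hiff.mp h)), if_neg hij, if_neg hij]
          ring
      · rw [dif_neg hj]
        have hij : i ≠ j := by intro h; rw [h] at hi; omega
        simp only [Matrix.add_apply, hW₁, hW₂, Matrix.of_apply, Matrix.diagonal_apply,
          dif_neg (by omega : ¬ μ ≤ (i : ℕ)), if_neg hij]
        ring
  -- Frobenius norm of W₂
  set S : ℝ := ∑ i ∈ Finset.univ.filter (fun i : Fin r => μ ≤ (i : ℕ)), σ i ^ 4 with hS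
  have hSnn : 0 ≤ S := by
    apply Finset.sum_nonneg
    intro i _
    have := hσnn i
    positivity
  have hW₂frob : frob W₂ = Real.sqrt S := by
    rw [frob, hS, Finset.sum_filter]
    congr 1
    apply Finset.sum_congr rfl
    intro i _
    have : ∀ j, (W₂ i j) ^ 2 = if i = j then (if μ ≤ (i : ℕ) then σ i ^ 4 else 0) else 0 := by
      intro j
      rw [hW₂, Matrix.diagonal_apply]
      by_cases hij : i = j
      · rw [if_pos hij, if_pos hij]
        by_cases hi : μ ≤ (i : ℕ) <;> simp [hi] <;> ring
      · rw [if_neg hij, if_neg hij]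
        ring
    simp only [this]
    rw [Finset.sum_ite_eq Finset.univ i (fun _ => if μ ≤ (i : ℕ) then σ i ^ 4 else 0)]
    simp
  -- Frobenius norm of W₁
  have hrowN : ∀ k : Fin (r - μ), (∑ j' : Fin μ, (N k j') ^ 2) ≤ spec N ^ 2 :=
    fun k => row_sq_le_spec N k
  have hW₁frob : frob W₁ ≤ spec N * Real.sqrt S := by
    have hkey : (∑ i : Fin r, ∑ j : Fin r, (W₁ i j) ^ 2) ≤ spec N ^ 2 * S := by
      rw [hS, Finset.mul_sum, Finset.sum_filter]
      apply Finset.sum_le_sum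
      intro i _
      by_cases hi : μ ≤ (i : ℕ)
      · rw [if_pos hi]
        have hstep : ∀ j : Fin r, (W₁ i j) ^ 2 =
            if hj : (j : ℕ) < μ then
              (σ i ^ 2 * N ⟨(i : ℕ) - μ, by have := i.isLt; omega⟩ ⟨j, hj⟩) ^ 2 else 0 := by
          intro j
          rw [hW₁, Matrix.of_apply, dif_pos hi]
          by_cases hj : (j : ℕ) < μ
          · rw [dif_pos hj, dif_pos hj]
          · rw [dif_neg hj, dif_neg hj]; ring
        simp only [hstep]
        have hbound : (∑ j' : Fin μ, (σ i ^ 2 * N ⟨(i : ℕ) - μ, by have := i.isLt; omega⟩ j') ^ 2)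
            ≤ spec N ^ 2 * σ i ^ 4 := by
          calc (∑ j' : Fin μ, (σ i ^ 2 * N ⟨(i : ℕ) - μ, by have := i.isLt; omega⟩ j') ^ 2)
                = σ i ^ 4 * ∑ j' : Fin μ, (N ⟨(i : ℕ) - μ, by have := i.isLt; omega⟩ j') ^ 2 := by
                  rw [Finset.mul_sum]
                  apply Finset.sum_congr rfl
                  intro j' _
                  ring
            _ ≤ σ i ^ 4 * spec N ^ 2 := by
                apply mul_le_mul_of_nonneg_left (hrowN _)
                have := hσnn i; positivity
            _ = spec N ^ 2 * σ i ^ 4 := by ring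
        exact le_trans (le_of_eq (sum_dite_lt hμr'
          (fun j' : Fin μ => (σ i ^ 2 * N ⟨(i : ℕ) - μ, by have := i.isLt; omega⟩ j') ^ 2))) hbound
      · rw [if_neg hi]
        exact le_of_eq (Finset.sum_eq_zero fun j _ => by
          rw [hW₁, Matrix.of_apply, dif_neg hi]
          norm_num)
    have h1 : frob W₁ ≤ Real.sqrt (spec N ^ 2 * S) := by
      rw [frob]
      exact Real.sqrt_le_sqrt hkey
    rwa [Real.sqrt_mul (by positivity), Real.sqrt_sq (spec_nonneg N)] at h1
  -- combine for the first claim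
  have hNspec : spec N ≤ spec R * spec Hdag := by
    rw [hN]; exact spec_mul_le R Hdag
  have hfirst : frob (C * Cᵀ * G * F - C * Cᵀ) ≤ (spec Hdag * spec R + 1) * Real.sqrt S := by
    rw [hfr, hsplit]
    calc frob (W₁ + W₂) ≤ frob W₁ + frob W₂ := frob_add_le W₁ W₂
      _ ≤ spec N * Real.sqrt S + Real.sqrt S := by
          rw [hW₂frob]
          exact add_le_add_left hW₁frob _
      _ ≤ (spec R * spec Hdag) * Real.sqrt S + Real.sqrt S := by
          apply add_le_add_left
          exact mul_le_mul_of_nonneg_right hNspec (Real.sqrt_nonneg _)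
      _ = (spec Hdag * spec R + 1) * Real.sqrt S := by ring
  constructor
  · exact hfirst
  -- second claim
  · have hUT : spec Uᵀ ≤ 1 := by
      apply spec_le_bound _ _ zero_le_one
      intro x
      set y : Fin r → ℝ := Uᵀ.mulVec x with hy
      have hyy : ∑ i, (y i) ^ 2 = y ⬝ᵥ y := by
        simp [dotProduct, sq]
      have hzz : (U.mulVec y) ⬝ᵥ (U.mulVec y) = y ⬝ᵥ y := by
        rw [Matrix.dotProduct_mulVec, ← Matrix.mulVec_transpose, Matrix.mulVec_mulVec,
          hU, Matrix.one_mulVec]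
      have hSx : y ⬝ᵥ y = x ⬝ᵥ (U.mulVec y) := by
        nth_rewrite 1 [hy]
        rw [Matrix.mulVec_transpose, ← Matrix.dotProduct_mulVec]
      have hcs : (x ⬝ᵥ (U.mulVec y)) ^ 2 ≤ (∑ i, (x i) ^ 2) * ((U.mulVec y) ⬝ᵥ (U.mulVec y)) := by
        have := Finset.sum_mul_sq_le_sq_mul_sq Finset.univ x (U.mulVec y)
        have hz : (U.mulVec y) ⬝ᵥ (U.mulVec y) = ∑ i, ((U.mulVec y) i) ^ 2 := by
          simp [dotProduct, sq]
        rw [hz]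
        exact this
      have hynn : 0 ≤ y ⬝ᵥ y := by
        rw [← hyy]; positivity
      have hxand : 0 ≤ ∑ i, (x i) ^ 2 := by positivity
      rw [hzz, ← hSx] at hcs
      -- hcs : (y ⬝ᵥ y)^2 ≤ (∑ x²) * (y ⬝ᵥ y)
      rw [hyy, one_pow, one_mul]
      exact le_of_sq_le_mul hynn hxand hcs
    have hspecP : spec P ≤ spec Hdag := by
      apply spec_le_bound _ _ (spec_nonneg Hdag)
      intro x
      have hPx : ∀ a, P.mulVec x a = Hdag.mulVec (fun j' : Fin μ => x (Fin.castLE hμr' j')) a := by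
        intro a
        show ∑ j : Fin r, P a j * x j = ∑ j' : Fin μ, Hdag a j' * x (Fin.castLE hμr' j')
        have hterm : ∀ j : Fin r, P a j * x j
            = if hj : (j : ℕ) < μ then Hdag a ⟨j, hj⟩ * x (Fin.castLE hμr' ⟨j, hj⟩) else 0 := by
          intro j
          rw [hP, Matrix.of_apply]
          by_cases hj : (j : ℕ) < μ
          · rw [dif_pos hj, dif_pos hj]
            exact rfl
          · rw [dif_neg hj, dif_neg hj, zero_mul]
        rw [Finset.sum_congr rfl (fun j _ => hterm j)]
        exact sum_dite_lt hμr' (fun j' : Fin μ => Hdag a j' * x (Fin.castLE hμr' j'))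
      simp only [hPx]
      calc (∑ a, (Hdag.mulVec (fun j' : Fin μ => x (Fin.castLE hμr' j')) a) ^ 2)
          ≤ spec Hdag ^ 2 * ∑ j' : Fin μ, (x (Fin.castLE hμr' j')) ^ 2 :=
            spec_mulVec_sq Hdag _
        _ ≤ spec Hdag ^ 2 * ∑ j : Fin r, (x j) ^ 2 := by
            apply mul_le_mul_of_nonneg_left _ (by positivity)
            have h0 : ∑ j : Fin r, (if _ : (j : ℕ) < μ then (x j) ^ 2 else 0)
                = ∑ j' : Fin μ, (x (Fin.castLE hμr' j')) ^ 2 :=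
              sum_dite_lt hμr' (fun j' : Fin μ => (x (Fin.castLE hμr' j')) ^ 2)
            rw [← h0]
            apply Finset.sum_le_sum
            intro j _
            by_cases hj : (j : ℕ) < μ
            · rw [dif_pos hj]
            · rw [dif_neg hj]
              positivity
    rw [hF]
    calc spec (P * Uᵀ) ≤ spec P * spec Uᵀ := spec_mul_le P Uᵀ
      _ ≤ spec Hdag * 1 :=
          mul_le_mul hspecP hUT (spec_nonneg _) (spec_nonneg _)
      _ = spec Hdag := mul_one _
end
end

section
/- (Expectation bound for uniformly sampled matrix multiplication.) With the setting of the previous statement but with uniform probabilities p_i = 1/I_2, one has E‖AB − CR‖_F^2 ≤ (I_2/K) ∑_{i=1}^{I_2} ‖A(:,i)‖_2^2 ‖B(i,:)‖_2^2 ≤ (I_2/K) ‖A‖_F^2 ‖B‖_F^2. -/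
open Matrix Finset

noncomputable section

lemma frob_sq {m n : Type*} [Fintype m] [Fintype n] (A : Matrix m n ℝ) :
    frob A ^ 2 = ∑ i, ∑ j, (A i j) ^ 2 := by
  apply Real.sq_sqrt
  positivity

lemma key {I2 K : ℕ} (h : Fin I2 → ℝ) (hs : ∑ i, h i = 0) :
    ∑ ξ : Fin K → Fin I2, (∑ t, h (ξ t)) ^ 2
      = K * I2 ^ (K - 1) * ∑ i, h i ^ 2 := by
  have step : ∀ t s : Fin K, (∑ ξ : Fin K → Fin I2, h (ξ t) * h (ξ s))
      = if t = s then (I2 : ℝ) ^ (K - 1) * ∑ i, h i ^ 2 else 0 := by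
    intro t s
    have hprod : ∀ ξ : Fin K → Fin I2,
        h (ξ t) * h (ξ s) =
          ∏ u, ((if u = t then h (ξ u) else 1) * (if u = s then h (ξ u) else 1)) := by
      intro ξ
      rw [Finset.prod_mul_distrib]
      simp [Finset.prod_ite_eq']
    calc (∑ ξ : Fin K → Fin I2, h (ξ t) * h (ξ s))
        = ∑ ξ : Fin K → Fin I2,
            ∏ u, ((if u = t then h (ξ u) else 1) * (if u = s then h (ξ u) else 1)) := by
          exact Finset.sum_congr rfl fun ξ _ => hprod ξ
      _ = ∏ u, ∑ x : Fin I2, ((if u = t then h x else 1) * (if u = s then h x else 1)) := by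
          exact (Fintype.prod_sum fun u x => (if u = t then h x else 1) * (if u = s then h x else 1)).symm
      _ = if t = s then (I2 : ℝ) ^ (K - 1) * ∑ i, h i ^ 2 else 0 := by
          by_cases hts : t = s
          · subst hts
            simp only [if_pos]
            rw [Finset.prod_eq_mul_prod_sdiff_singleton_of_mem (Finset.mem_univ t)]
            have h1 : (∑ x : Fin I2, (if t = t then h x else 1) * (if t = t then h x else 1))
                = ∑ i, h i ^ 2 := by simp [sq]
            have h2 : ∀ u ∈ Finset.univ \ {t},
                (∑ x : Fin I2, (if u = t then h x else 1) * (if u = t then h x else 1))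
                  = (I2 : ℝ) := by
              intro u hu
              simp only [Finset.mem_sdiff, Finset.mem_singleton] at hu
              simp [hu.2]
            rw [h1, Finset.prod_congr rfl h2, Finset.prod_const]
            have hcard : (Finset.univ \ {t} : Finset (Fin K)).card = K - 1 := by
              rw [Finset.sdiff_singleton_eq_erase, Finset.card_erase_of_mem (Finset.mem_univ t)]
              simp
            rw [hcard]; ring
          · rw [if_neg hts]
            apply Finset.prod_eq_zero (Finset.mem_univ t)
            simp [hts, hs]
  calc ∑ ξ : Fin K → Fin I2, (∑ t, h (ξ t)) ^ 2
      = ∑ ξ : Fin K → Fin I2, ∑ t, ∑ s, h (ξ t) * h (ξ s) := by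
        refine Finset.sum_congr rfl fun ξ _ => ?_
        rw [sq, Finset.sum_mul_sum]
    _ = ∑ t, ∑ s, ∑ ξ : Fin K → Fin I2, h (ξ t) * h (ξ s) := by
        rw [Finset.sum_comm]
        exact Finset.sum_congr rfl fun t _ => Finset.sum_comm
    _ = ∑ t : Fin K, ((I2 : ℝ) ^ (K - 1) * ∑ i, h i ^ 2) := by
        refine Finset.sum_congr rfl fun t _ => ?_
        rw [Finset.sum_congr rfl fun s _ => step t s]
        simp
    _ = K * I2 ^ (K - 1) * ∑ i, h i ^ 2 := by
        rw [Finset.sum_const]; simp; ring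

/-- Expectation bound for uniformly sampled matrix multiplication. -/
theorem stmt15 {I1 I2 I3 K : ℕ} (hK : 1 ≤ K)
    (A : Matrix (Fin I1) (Fin I2) ℝ) (B : Matrix (Fin I2) (Fin I3) ℝ) :
    (∑ ξ : Fin K → Fin I2, ((1 : ℝ) / I2) ^ K *
        frob (A * B -
          (Matrix.of fun a t => Real.sqrt ((I2 : ℝ) / K) * A a (ξ t)) *
            (Matrix.of fun t b => Real.sqrt ((I2 : ℝ) / K) * B (ξ t) b)) ^ 2 ≤
      (I2 : ℝ) / K * ∑ i, (∑ a, A a i ^ 2) * (∑ b, B i b ^ 2)) ∧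
    (I2 : ℝ) / K * ∑ i, (∑ a, A a i ^ 2) * (∑ b, B i b ^ 2) ≤
      (I2 : ℝ) / K * (frob A ^ 2 * frob B ^ 2) := by
  have hKR : (0 : ℝ) < K := by exact_mod_cast hK
  have hKne : (K : ℝ) ≠ 0 := ne_of_gt hKR
  rcases Nat.eq_zero_or_pos I2 with hI2 | hI2
  · subst hI2
    haveI : Nonempty (Fin K) := ⟨⟨0, hK⟩⟩
    haveI : IsEmpty (Fin K → Fin 0) := by
      constructor; intro f; exact (f (Classical.arbitrary (Fin K))).elim0
    constructor
    · simp
    · simp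
  have hI2R : (0 : ℝ) < I2 := by exact_mod_cast hI2
  have hI2ne : (I2 : ℝ) ≠ 0 := ne_of_gt hI2R
  have hcnn : (0 : ℝ) ≤ (I2 : ℝ) / K := by positivity
  have hss : Real.sqrt ((I2 : ℝ) / K) * Real.sqrt ((I2 : ℝ) / K) = (I2 : ℝ) / K :=
    Real.mul_self_sqrt hcnn
  constructor
  · -- first inequality
    have main_ab : ∀ (a : Fin I1) (b : Fin I3),
        (∑ ξ : Fin K → Fin I2, ((1 : ℝ) / I2) ^ K *
          ((A * B -
            (Matrix.of fun a t => Real.sqrt ((I2 : ℝ) / K) * A a (ξ t)) *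
              (Matrix.of fun t b => Real.sqrt ((I2 : ℝ) / K) * B (ξ t) b)) a b) ^ 2)
          ≤ (I2 : ℝ) / K * ∑ i, A a i ^ 2 * B i b ^ 2 := by
      intro a b
      set μ : ℝ := (∑ i, A a i * B i b) / K with hμ
      set g : Fin I2 → ℝ := fun i => (I2 : ℝ) / K * (A a i * B i b) with hg
      set h : Fin I2 → ℝ := fun i => μ - g i with hh
      have hgsum : ∑ i, g i = I2 * μ := by
        rw [hg, hμ, ← Finset.mul_sum]; field_simp
      have hsum0 : ∑ i, h i = 0 := by
        rw [hh]; simp only []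
        rw [Finset.sum_sub_distrib, Finset.sum_const, hgsum]
        simp [nsmul_eq_mul]
      have hentry : ∀ ξ : Fin K → Fin I2,
          (A * B -
            (Matrix.of fun a t => Real.sqrt ((I2 : ℝ) / K) * A a (ξ t)) *
              (Matrix.of fun t b => Real.sqrt ((I2 : ℝ) / K) * B (ξ t) b)) a b
            = ∑ t, h (ξ t) := by
        intro ξ
        rw [Matrix.sub_apply, Matrix.mul_apply, Matrix.mul_apply]
        have h1 : ∀ t : Fin K,
            (Matrix.of fun a t => Real.sqrt ((I2 : ℝ) / K) * A a (ξ t)) a t *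
              (Matrix.of fun t b => Real.sqrt ((I2 : ℝ) / K) * B (ξ t) b) t b = g (ξ t) := by
          intro t
          simp only [Matrix.of_apply, hg]
          rw [mul_mul_mul_comm, hss]
        rw [Finset.sum_congr rfl fun t _ => h1 t]
        rw [show (∑ i, A a i * B i b) = (K : ℝ) * μ by rw [hμ]; field_simp]
        rw [hh]
        simp only []
        rw [Finset.sum_sub_distrib, Finset.sum_const]
        simp [nsmul_eq_mul]
      have hpow : ((1 : ℝ) / I2) ^ K * ((K : ℝ) * (I2 : ℝ) ^ (K - 1)) = (K : ℝ) / I2 := by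
        have hK1 : K - 1 + 1 = K := Nat.succ_pred_eq_of_pos hK
        have : (I2 : ℝ) ^ K = (I2 : ℝ) ^ (K - 1) * I2 := by
          rw [← pow_succ, hK1]
        rw [div_pow, one_pow, this]
        field_simp
      calc (∑ ξ : Fin K → Fin I2, ((1 : ℝ) / I2) ^ K *
            ((A * B -
              (Matrix.of fun a t => Real.sqrt ((I2 : ℝ) / K) * A a (ξ t)) *
                (Matrix.of fun t b => Real.sqrt ((I2 : ℝ) / K) * B (ξ t) b)) a b) ^ 2)
          = ((1 : ℝ) / I2) ^ K * ∑ ξ : Fin K → Fin I2, (∑ t, h (ξ t)) ^ 2 := by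
            rw [Finset.mul_sum]
            exact Finset.sum_congr rfl fun ξ _ => by rw [hentry ξ]
        _ = (K : ℝ) / I2 * ∑ i, h i ^ 2 := by
            rw [key h hsum0, ← mul_assoc, ← hpow]
        _ ≤ (K : ℝ) / I2 * ∑ i, g i ^ 2 := by
            apply mul_le_mul_of_nonneg_left _ (by positivity)
            have hexp : ∑ i, h i ^ 2 = ∑ i, g i ^ 2 - I2 * μ ^ 2 := by
              have e1 : ∀ i ∈ Finset.univ, h i ^ 2 = μ ^ 2 - 2 * μ * g i + g i ^ 2 := by
                intro i _; rw [hh]; ring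
              rw [Finset.sum_congr rfl e1]
              rw [Finset.sum_add_distrib, Finset.sum_sub_distrib, Finset.sum_const,
                ← Finset.mul_sum, hgsum]
              simp [nsmul_eq_mul]; ring
            rw [hexp]
            have : (0:ℝ) ≤ (I2 : ℝ) * μ ^ 2 := by positivity
            linarith
        _ = (I2 : ℝ) / K * ∑ i, A a i ^ 2 * B i b ^ 2 := by
            rw [Finset.mul_sum, Finset.mul_sum]
            refine Finset.sum_congr rfl fun i _ => ?_
            rw [hg]; simp only []
            field_simp
    calc (∑ ξ : Fin K → Fin I2, ((1 : ℝ) / I2) ^ K *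
          frob (A * B -
            (Matrix.of fun a t => Real.sqrt ((I2 : ℝ) / K) * A a (ξ t)) *
              (Matrix.of fun t b => Real.sqrt ((I2 : ℝ) / K) * B (ξ t) b)) ^ 2)
        = ∑ a, ∑ b, ∑ ξ : Fin K → Fin I2, ((1 : ℝ) / I2) ^ K *
            ((A * B -
              (Matrix.of fun a t => Real.sqrt ((I2 : ℝ) / K) * A a (ξ t)) *
                (Matrix.of fun t b => Real.sqrt ((I2 : ℝ) / K) * B (ξ t) b)) a b) ^ 2 := by
          have e1 : ∀ ξ : Fin K → Fin I2, ((1 : ℝ) / I2) ^ K *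
              frob (A * B -
                (Matrix.of fun a t => Real.sqrt ((I2 : ℝ) / K) * A a (ξ t)) *
                  (Matrix.of fun t b => Real.sqrt ((I2 : ℝ) / K) * B (ξ t) b)) ^ 2
              = ∑ a, ∑ b, ((1 : ℝ) / I2) ^ K *
                ((A * B -
                  (Matrix.of fun a t => Real.sqrt ((I2 : ℝ) / K) * A a (ξ t)) *
                    (Matrix.of fun t b => Real.sqrt ((I2 : ℝ) / K) * B (ξ t) b)) a b) ^ 2 := by
            intro ξ
            rw [frob_sq, Finset.mul_sum]
            exact Finset.sum_congr rfl fun a _ => Finset.mul_sum _ _ _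
          rw [Finset.sum_congr rfl fun ξ _ => e1 ξ, Finset.sum_comm]
          exact Finset.sum_congr rfl fun a _ => Finset.sum_comm
      _ ≤ ∑ a, ∑ b, (I2 : ℝ) / K * ∑ i, A a i ^ 2 * B i b ^ 2 := by
          refine Finset.sum_le_sum fun a _ => Finset.sum_le_sum fun b _ => main_ab a b
      _ = (I2 : ℝ) / K * ∑ i, (∑ a, A a i ^ 2) * (∑ b, B i b ^ 2) := by
          simp only [← Finset.mul_sum]
          congr 1
          calc ∑ a, ∑ b, ∑ i, A a i ^ 2 * B i b ^ 2
              = ∑ a, ∑ i, ∑ b, A a i ^ 2 * B i b ^ 2 :=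
                Finset.sum_congr rfl fun a _ => Finset.sum_comm
            _ = ∑ i, ∑ a, ∑ b, A a i ^ 2 * B i b ^ 2 := Finset.sum_comm
            _ = ∑ i, (∑ a, A a i ^ 2) * (∑ b, B i b ^ 2) :=
                Finset.sum_congr rfl fun i _ =>
                  (Finset.sum_mul_sum _ _ _ _).symm
  · -- second inequality
    apply mul_le_mul_of_nonneg_left _ hcnn
    rw [frob_sq, frob_sq]
    have hA : ∀ i : Fin I2, (0:ℝ) ≤ ∑ a, A a i ^ 2 := fun i => by positivity
    have hB : ∀ i : Fin I2, (0:ℝ) ≤ ∑ b, B i b ^ 2 := fun i => by positivity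
    calc ∑ i, (∑ a, A a i ^ 2) * (∑ b, B i b ^ 2)
        ≤ ∑ i, (∑ a, A a i ^ 2) * (∑ j, ∑ b, B j b ^ 2) := by
          refine Finset.sum_le_sum fun i _ => ?_
          exact mul_le_mul_of_nonneg_left
            (Finset.single_le_sum (fun j _ => hB j) (Finset.mem_univ i)) (hA i)
      _ = (∑ i, ∑ a, A a i ^ 2) * (∑ j, ∑ b, B j b ^ 2) := by rw [Finset.sum_mul]
      _ = (∑ a, ∑ i, A a i ^ 2) * (∑ j, ∑ b, B j b ^ 2) := by rw [Finset.sum_comm]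

end
end
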